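/- Let r ∈ ℝ with −1 < r < 1, and define g(r, ν) = (1/(2π))·(ν + r·sin ν·arccos(−r·cos ν)/√(1 − r²·cos²ν)). Then for all real a ≤ b, ∫_a^b g(r, ν) dν = (b² − a²)/(4π) − (1/(4π))·(arccos(−r·cos b)² − arccos(−r·cos a)²). -/

import Mathlib

open Real

/-- The cumulative distribution function of the angle difference for two discs
correlated by `r`. -/
noncomputable def gFun (r ν : ℝ) : ℝ :=
  (1 / (2 * π)) * (ν + r * Real.sin ν * Real.arccos (-r * Real.cos ν) /
    Real.sqrt (1 - r ^ 2 * (Real.cos ν) ^ 2))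

lemma sq_lt_one' {r ν : ℝ} (hr₁ : -1 < r) (hr₂ : r < 1) :
    r ^ 2 * (Real.cos ν) ^ 2 < 1 := by
  have h1 : r ^ 2 < 1 := by nlinarith
  have h2 : (Real.cos ν) ^ 2 ≤ 1 := by
    nlinarith [Real.neg_one_le_cos ν, Real.cos_le_one ν]
  nlinarith [sq_nonneg r, sq_nonneg (Real.cos ν)]

lemma hasDerivAt_F (r : ℝ) (hr₁ : -1 < r) (hr₂ : r < 1) (ν : ℝ) :
    HasDerivAt (fun x => x ^ 2 / (4 * π) -
      (1 / (4 * π)) * (Real.arccos (-r * Real.cos x)) ^ 2) (gFun r ν) ν := by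
  have hlt := sq_lt_one' (ν := ν) hr₁ hr₂
  have hx2 : (-r * Real.cos ν) ^ 2 = r ^ 2 * (Real.cos ν) ^ 2 := by ring
  have hne₁ : -r * Real.cos ν ≠ -1 := by
    intro h
    have : (-r * Real.cos ν) ^ 2 = 1 := by rw [h]; norm_num
    rw [hx2] at this; linarith
  have hne₂ : -r * Real.cos ν ≠ 1 := by
    intro h
    have : (-r * Real.cos ν) ^ 2 = 1 := by rw [h]; norm_num
    rw [hx2] at this; linarith
  have hinner : HasDerivAt (fun x => -r * Real.cos x) (-r * (-Real.sin ν)) ν :=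
    (Real.hasDerivAt_cos ν).const_mul (-r)
  have harc : HasDerivAt (fun x => Real.arccos (-r * Real.cos x))
      (-(1 / Real.sqrt (1 - (-r * Real.cos ν) ^ 2)) * (-r * (-Real.sin ν))) ν :=
    by have := (Real.hasDerivAt_arccos hne₁ hne₂).comp ν hinner; exact this
  have hsq : HasDerivAt (fun x => (Real.arccos (-r * Real.cos x)) ^ 2)
      (2 * Real.arccos (-r * Real.cos ν) *
        (-(1 / Real.sqrt (1 - (-r * Real.cos ν) ^ 2)) * (-r * (-Real.sin ν)))) ν := by
    have := harc.fun_pow 2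
    simpa [mul_comm, mul_assoc, mul_left_comm] using this
  have h1 : HasDerivAt (fun x : ℝ => x ^ 2 / (4 * π)) (2 * ν / (4 * π)) ν := by
    simpa using (hasDerivAt_pow 2 ν).div_const (4 * π)
  have h := h1.fun_sub (hsq.const_mul (1 / (4 * π)))
  refine h.congr_deriv ?_
  have hπ : π ≠ 0 := Real.pi_ne_zero
  have hs : Real.sqrt (1 - r ^ 2 * (Real.cos ν) ^ 2) ≠ 0 :=
    (Real.sqrt_pos.mpr (by linarith)).ne'
  rw [hx2]
  unfold gFun
  field_simp
  ring

lemma continuous_gFun (r : ℝ) (hr₁ : -1 < r) (hr₂ : r < 1) : Continuous (gFun r) := by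
  unfold gFun
  apply continuous_const.mul
  apply continuous_id.add
  apply Continuous.div
  · exact ((continuous_const.mul Real.continuous_sin).mul
      (Real.continuous_arccos.comp (continuous_const.mul Real.continuous_cos)))
  · exact Real.continuous_sqrt.comp (continuous_const.sub
      (continuous_const.mul (Real.continuous_cos.pow 2)))
  · intro ν
    have := sq_lt_one' (ν := ν) hr₁ hr₂
    exact (Real.sqrt_pos.mpr (by linarith)).ne'

/-- Integral of `g(r, ·)` over an interval `[a, b]`. -/
theorem integral_gFun (r : ℝ) (hr₁ : -1 < r) (hr₂ : r < 1) (a b : ℝ) (hab : a ≤ b) :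
    ∫ ν in a..b, gFun r ν =
      (b ^ 2 - a ^ 2) / (4 * π) -
        (1 / (4 * π)) *
          ((Real.arccos (-r * Real.cos b)) ^ 2 - (Real.arccos (-r * Real.cos a)) ^ 2) := by
  have := intervalIntegral.integral_eq_sub_of_hasDerivAt
    (f := fun x => x ^ 2 / (4 * π) - (1 / (4 * π)) * (Real.arccos (-r * Real.cos x)) ^ 2)
    (fun x _ => hasDerivAt_F r hr₁ hr₂ x)
    ((continuous_gFun r hr₁ hr₂).intervalIntegrable a b)
  rw [this]
  ring
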